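/- Let S be a join-semilattice with least element 0, let P be a poset, and let μ be an S-valued p-measure on P satisfying: (a) for all x ≤ y in P and all a, b ∈ S with μ(y,x) ≤ a ⊔ b, there exist a positive integer n and elements x = z_0 ≤ z_1 ≤ ⋯ ≤ z_n = y of P such that for every i < n either μ(z_{i+1}, z_i) ≤ a or μ(z_{i+1}, z_i) ≤ b; (b) every element of S is the join of a finite subset of Σ = {μ(y,x) : x ≤ y in P}. Then S is distributive. -/

import Mathlib

/-- If a join-semilattice `S` with zero carries an `S`-valued p-measure `μ`
on a poset `P` satisfying the refinement condition (a) and such that every element of `S` is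
a finite join of Boolean values (b), then `S` is distributive. -/
theorem stmt1 (S : Type*) [SemilatticeSup S] [OrderBot S]
    (P : Type*) [PartialOrder P] (μ : P → P → S)
    (htri : ∀ x y z : P, μ x z ≤ μ x y ⊔ μ y z)
    (hzero : ∀ x y : P, x ≤ y → μ x y = ⊥)
    (ha : ∀ x y : P, x ≤ y → ∀ a b : S, μ y x ≤ a ⊔ b →
      ∃ n : ℕ, 0 < n ∧ ∃ z : ℕ → P, z 0 = x ∧ z n = y ∧
        ∀ i < n, z i ≤ z (i + 1) ∧ (μ (z (i + 1)) (z i) ≤ a ∨ μ (z (i + 1)) (z i) ≤ b))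
    (hb : ∀ s : S, ∃ F : Finset (P × P), (∀ p ∈ F, p.2 ≤ p.1) ∧
      s = F.sup fun p => μ p.1 p.2) :
    ∀ a b c : S, c ≤ a ⊔ b → ∃ x y : S, x ≤ a ∧ y ≤ b ∧ c = x ⊔ y := by
  classical
  -- Key step: the conclusion for c of the form μ y x with x ≤ y.
  have key : ∀ x y : P, x ≤ y → ∀ a b : S, μ y x ≤ a ⊔ b →
      ∃ u v : S, u ≤ a ∧ v ≤ b ∧ μ y x = u ⊔ v := by
    intro x y hxy a b hab
    obtain ⟨n, hn, z, hz0, hzn, hstep⟩ := ha x y hxy a b hab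
    -- monotonicity of the chain
    have hmono : ∀ i j, i ≤ j → j ≤ n → z i ≤ z j := by
      intro i j hij hjn
      induction j with
      | zero => simp [Nat.le_zero.mp hij]
      | succ k ih =>
        rcases Nat.lt_or_ge i (k+1) with h | h
        · exact le_trans (ih (by omega) (by omega)) (hstep k (by omega)).1
        · have : i = k + 1 := by omega
          subst this; exact le_rfl
    -- every piece is ≤ μ y x
    have hpiece : ∀ i < n, μ (z (i+1)) (z i) ≤ μ y x := by
      intro i hi
      have h1 : μ (z (i+1)) (z i) ≤ μ (z (i+1)) y ⊔ (μ y x ⊔ μ x (z i)) :=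
        le_trans (htri _ y _) (sup_le_sup_left (htri _ x _) _)
      have h2 : μ (z (i+1)) y = ⊥ := hzero _ _ (hzn ▸ hmono (i+1) n (by omega) le_rfl)
      have h3 : μ x (z i) = ⊥ := hzero _ _ (hz0 ▸ hmono 0 i (by omega) (by omega))
      simpa [h2, h3] using h1
    -- μ y x ≤ join of pieces
    have hchain : ∀ k ≤ n, μ (z k) (z 0) ≤ (Finset.range k).sup (fun i => μ (z (i+1)) (z i)) := by
      intro k hk
      induction k with
      | zero => simp [hzero _ _ le_rfl]
      | succ m ih =>
        refine le_trans (htri (z (m+1)) (z m) (z 0)) (sup_le ?_ ?_)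
        · exact Finset.le_sup (f := fun i => μ (z (i+1)) (z i)) (Finset.self_mem_range_succ m)
        · exact le_trans (ih (by omega)) (Finset.sup_mono (by simp [Finset.range_subset]; intro x hx; omega))
    set u : S := (Finset.range n).sup (fun i => if μ (z (i+1)) (z i) ≤ a then μ (z (i+1)) (z i) else ⊥) with hu
    set v : S := (Finset.range n).sup (fun i => if μ (z (i+1)) (z i) ≤ a then ⊥ else μ (z (i+1)) (z i)) with hv
    refine ⟨u, v, ?_, ?_, le_antisymm ?_ ?_⟩
    · refine Finset.sup_le fun i hi => ?_
      split_ifs with h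
      · exact h
      · exact bot_le
    · refine Finset.sup_le fun i hi => ?_
      simp only [Finset.mem_range] at hi
      split_ifs with h
      · exact bot_le
      · exact ((hstep i hi).2).resolve_left h
    · calc μ y x = μ (z n) (z 0) := by rw [hz0, hzn]
        _ ≤ (Finset.range n).sup (fun i => μ (z (i+1)) (z i)) := hchain n le_rfl
        _ ≤ u ⊔ v := by
            refine Finset.sup_le fun i hi => ?_
            by_cases h : μ (z (i+1)) (z i) ≤ a
            · exact le_sup_of_le_left (Finset.le_sup_of_le hi (by simp [h]))
            · exact le_sup_of_le_right (Finset.le_sup_of_le hi (by simp [h]))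
    · refine sup_le (Finset.sup_le fun i hi => ?_) (Finset.sup_le fun i hi => ?_) <;>
        simp only [Finset.mem_range] at hi
      · split_ifs
        · exact hpiece i hi
        · exact bot_le
      · split_ifs
        · exact bot_le
        · exact hpiece i hi
  intro a b c hc
  obtain ⟨F, hF, hFc⟩ := hb c
  -- choose decomposition for each pair
  have hchoice : ∀ p ∈ F, ∃ u v : S, u ≤ a ∧ v ≤ b ∧ μ p.1 p.2 = u ⊔ v := by
    intro p hp
    exact key p.2 p.1 (hF p hp) a b (le_trans (hFc ▸ Finset.le_sup (f := fun p => μ p.1 p.2) hp) hc)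
  choose! u v hua hvb huv using hchoice
  refine ⟨F.sup fun p => u p, F.sup fun p => v p, Finset.sup_le fun p hp => hua p hp,
    Finset.sup_le fun p hp => hvb p hp, ?_⟩
  rw [hFc, ← Finset.sup_sup]
  exact Finset.sup_congr rfl fun p hp => huv p hp
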